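/- Chaining along dyadics: let h(t)=sqrt(t log(1/t)) and let H: {(r,s): 0≤r≤s≤T} → [0,∞) satisfy H(r,s) ≤ H(r,t)+H(t,s) for r≤t≤s and H(r,r)=0. Suppose there are constants C_4 > 0 and N with 2^{-N} ≤ e^{-1} such that H((k-1)2^{-n}, k2^{-n}) ≤ C_4 h(2^{-n}) for all n > N and 1 ≤ k ≤ 2^n T. Then there is a constant C depending only on C_4 such that for all dyadic rationals r, s ∈ [0,T] with 0 < s - r ≤ 2^{-N}, H(r,s) ≤ C h(s-r). -/

import Mathlib

/-- The modulus function `h(t) = sqrt(t log(1/t))`. -/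
noncomputable def modFun (t : ℝ) : ℝ := Real.sqrt (t * Real.log (1 / t))

lemma modFun_nonneg (t : ℝ) : 0 ≤ modFun t := Real.sqrt_nonneg _

lemma modFun_two_pow (j : ℕ) :
    modFun (((2:ℝ) ^ j)⁻¹) = Real.sqrt (((2:ℝ) ^ j)⁻¹ * ((j : ℝ) * Real.log 2)) := by
  unfold modFun
  rw [one_div, inv_inv, Real.log_pow]

lemma modFun_mono {x y : ℝ} (hx : 0 < x) (hxy : x ≤ y) (hy : y ≤ Real.exp (-1)) :
    modFun x ≤ modFun y := by
  unfold modFun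
  apply Real.sqrt_le_sqrt
  have hy0 : 0 < y := lt_of_lt_of_le hx hxy
  rw [one_div, one_div, Real.log_inv, Real.log_inv]
  have hL : 1 ≤ -Real.log y := by
    have h := Real.log_le_log hy0 hy
    rw [Real.log_exp] at h
    linarith
  have key : Real.log y - Real.log x ≤ y / x - 1 := by
    have h := Real.log_le_sub_one_of_pos (show 0 < y / x by positivity)
    rwa [Real.log_div (ne_of_gt hy0) (ne_of_gt hx)] at h
  have h1 : x * (Real.log y - Real.log x) ≤ y - x := by
    have := mul_le_mul_of_nonneg_left key hx.le
    have e : x * (y / x - 1) = y - x := by field_simp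
    linarith [e ▸ this]
  nlinarith [mul_nonneg (sub_nonneg.2 hxy) (sub_nonneg.2 hL)]

lemma one_add_le_pow98 : ∀ i : ℕ, (1:ℝ) + i ≤ 64 * (9/8:ℝ) ^ i := by
  intro i
  induction i with
  | zero => norm_num
  | succ i ih =>
    have h1 : (1:ℝ) ≤ (9/8:ℝ) ^ i := one_le_pow₀ (by norm_num)
    push_cast
    rw [pow_succ]
    nlinarith

lemma term_bound (n i : ℕ) :
    modFun (((2:ℝ) ^ (n + 1 + i))⁻¹) ≤ 8 * (3/4:ℝ) ^ i * modFun (((2:ℝ) ^ (n + 1))⁻¹) := by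
  rw [modFun_two_pow, modFun_two_pow]
  have h8 : (0:ℝ) ≤ 8 * (3/4:ℝ) ^ i := by positivity
  rw [show (8 * (3/4:ℝ) ^ i) = Real.sqrt ((8 * (3/4:ℝ) ^ i) ^ 2) from (Real.sqrt_sq h8).symm,
    ← Real.sqrt_mul (by positivity)]
  apply Real.sqrt_le_sqrt
  have hlog : (0:ℝ) ≤ Real.log 2 := Real.log_nonneg (by norm_num)
  have e1 : ((2:ℝ) ^ (n + 1 + i))⁻¹ = ((2:ℝ) ^ (n+1))⁻¹ * ((2:ℝ) ^ i)⁻¹ := by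
    rw [pow_add, mul_inv]
  rw [e1]
  have key : ((n:ℝ) + 1 + i) * ((2:ℝ) ^ i)⁻¹ ≤ (8 * (3/4:ℝ) ^ i) ^ 2 * ((n:ℝ) + 1) := by
    have h1 : ((n:ℝ) + 1 + i) ≤ ((n:ℝ) + 1) * (1 + i) := by
      have : (0:ℝ) ≤ (n:ℝ) * i := by positivity
      nlinarith
    have h2 : (1:ℝ) + i ≤ 64 * (9/8:ℝ) ^ i := one_add_le_pow98 i
    have h3 : (8 * (3/4:ℝ) ^ i) ^ 2 = 64 * (9/16:ℝ) ^ i := by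
      have : ((3/4:ℝ) ^ i) ^ 2 = (9/16:ℝ) ^ i := by
        rw [← pow_mul, mul_comm i 2, pow_mul]; norm_num
      rw [mul_pow, this]; norm_num
    have h4 : (9/16:ℝ) ^ i * (2:ℝ) ^ i = (9/8:ℝ) ^ i := by
      rw [← mul_pow]; norm_num
    have hpow : (0:ℝ) < (2:ℝ) ^ i := by positivity
    rw [h3]
    rw [← mul_le_mul_iff_of_pos_right hpow]
    calc ((n:ℝ) + 1 + i) * ((2:ℝ) ^ i)⁻¹ * (2:ℝ) ^ i = ((n:ℝ) + 1 + i) := by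
          field_simp
      _ ≤ ((n:ℝ) + 1) * (64 * (9/8:ℝ) ^ i) := by nlinarith [Nat.cast_nonneg (α := ℝ) n]
      _ = 64 * (9/16:ℝ) ^ i * ((n:ℝ) + 1) * (2:ℝ) ^ i := by rw [← h4]; ring
  push_cast
  calc ((2:ℝ) ^ (n+1))⁻¹ * ((2:ℝ) ^ i)⁻¹ * (((n:ℝ) + 1 + i) * Real.log 2)
      = (((n:ℝ) + 1 + i) * ((2:ℝ) ^ i)⁻¹) * (((2:ℝ) ^ (n+1))⁻¹ * Real.log 2) := by
        push_cast; ring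
    _ ≤ ((8 * (3/4:ℝ) ^ i) ^ 2 * ((n:ℝ) + 1)) * (((2:ℝ) ^ (n+1))⁻¹ * Real.log 2) := by
        apply mul_le_mul_of_nonneg_right key (by positivity)
    _ = (8 * (3/4:ℝ) ^ i) ^ 2 * (((2:ℝ) ^ (n+1))⁻¹ * (((n:ℝ) + 1) * Real.log 2)) := by
        push_cast; ring

lemma geom_aux : ∀ k : ℕ, ∑ i ∈ Finset.range k, ((3:ℝ)/4) ^ i ≤ 4 - 4 * ((3:ℝ)/4) ^ k := by
  intro k
  induction k with
  | zero => simp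
  | succ k ih =>
    rw [Finset.sum_range_succ, pow_succ]
    nlinarith [ih]

lemma chain_lemma (T C₄ : ℝ) (hC₄ : 0 < C₄) (N : ℕ)
    (H : ℝ → ℝ → ℝ)
    (hHnn : ∀ r s : ℝ, 0 ≤ H r s)
    (hHrr : ∀ r : ℝ, H r r = 0)
    (htri : ∀ r t s : ℝ, 0 ≤ r → r ≤ t → t ≤ s → s ≤ T → H r s ≤ H r t + H t s)
    (hdy : ∀ n : ℕ, N < n → ∀ k : ℕ, 1 ≤ k → (k : ℝ) ≤ 2 ^ n * T →
      H (((k : ℝ) - 1) * ((2 : ℝ) ^ n)⁻¹) ((k : ℝ) * ((2 : ℝ) ^ n)⁻¹) ≤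
        C₄ * modFun (((2 : ℝ) ^ n)⁻¹))
    (n : ℕ) (hn : N ≤ n) :
    ∀ d a b : ℕ, a ≤ b → (b : ℝ) * ((2:ℝ) ^ (n + 1 + d))⁻¹ ≤ T → b - a ≤ 2 ^ (d + 1) →
      H ((a : ℝ) * ((2:ℝ) ^ (n + 1 + d))⁻¹) ((b : ℝ) * ((2:ℝ) ^ (n + 1 + d))⁻¹) ≤
        2 * C₄ * ∑ i ∈ Finset.range (d + 1), modFun (((2:ℝ) ^ (n + 1 + i))⁻¹) := by
  -- a single dyadic step at any level M > N
  have hstep : ∀ M : ℕ, N < M → ∀ k : ℕ, ((k : ℝ) + 1) * ((2:ℝ) ^ M)⁻¹ ≤ T →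
      H ((k : ℝ) * ((2:ℝ) ^ M)⁻¹) (((k : ℝ) + 1) * ((2:ℝ) ^ M)⁻¹) ≤
        C₄ * modFun (((2:ℝ) ^ M)⁻¹) := by
    intro M hM k hk
    have hk' : ((k : ℝ) + 1 : ℝ) ≤ 2 ^ M * T := by
      have hp : (0:ℝ) < (2:ℝ) ^ M := by positivity
      rw [← mul_le_mul_iff_of_pos_right (inv_pos.2 hp)]
      calc ((k:ℝ) + 1) * ((2:ℝ) ^ M)⁻¹ ≤ T := hk
        _ = 2 ^ M * T * ((2:ℝ) ^ M)⁻¹ := by field_simp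
    have h := hdy M hM (k + 1) (Nat.le_add_left 1 k) (by exact_mod_cast hk')
    push_cast at h
    simp only [show (k:ℝ) + 1 - 1 = (k:ℝ) from by ring] at h
    exact h
  have hsum_nonneg : ∀ d : ℕ, 0 ≤ ∑ i ∈ Finset.range (d + 1), modFun (((2:ℝ) ^ (n + 1 + i))⁻¹) :=
    fun d => Finset.sum_nonneg fun i _ => modFun_nonneg _
  intro d
  induction d with
  | zero =>
    intro a b hab hbT hgap
    simp only [Nat.add_zero] at hbT ⊢
    rw [Finset.sum_range_succ, Finset.sum_range_zero, zero_add, Nat.add_zero]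
    have hN1 : N < n + 1 := by omega
    have hu : (0:ℝ) < ((2:ℝ) ^ (n + 1))⁻¹ := by positivity
    have hb2 : b = a ∨ b = a + 1 ∨ b = a + 2 := by omega
    rcases hb2 with rfl | rfl | rfl
    · rw [hHrr]
      nlinarith [modFun_nonneg (((2:ℝ) ^ (n + 1))⁻¹)]
    · have h := hstep (n + 1) hN1 a (by push_cast at hbT ⊢; linarith)
      have e : ((a + 1 : ℕ) : ℝ) = (a:ℝ) + 1 := by push_cast; ring
      rw [e]
      nlinarith [modFun_nonneg (((2:ℝ) ^ (n + 1))⁻¹), h]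
    · -- b = a + 2
      have e2 : ((a + 2 : ℕ) : ℝ) = (a:ℝ) + 2 := by push_cast; ring
      rw [e2]
      rw [e2] at hbT
      have htr := htri ((a:ℝ) * ((2:ℝ) ^ (n + 1))⁻¹) (((a:ℝ) + 1) * ((2:ℝ) ^ (n + 1))⁻¹)
        (((a:ℝ) + 2) * ((2:ℝ) ^ (n + 1))⁻¹)
        (by positivity) (by nlinarith [hu]) (by nlinarith [hu]) hbT
      have h1 := hstep (n + 1) hN1 a (by nlinarith [hu])
      have h2 := hstep (n + 1) hN1 (a + 1) (by push_cast; nlinarith [hu])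
      push_cast at h2
      have e3 : ((a:ℝ) + 1 + 1) = (a:ℝ) + 2 := by ring
      rw [e3] at h2
      linarith
  | succ d ih =>
    intro a b hab hbT hgap
    have hN1 : N < n + 1 + (d + 1) := by omega
    have hu : (0:ℝ) < ((2:ℝ) ^ (n + 1 + (d + 1)))⁻¹ := by positivity
    have hsum : ∑ i ∈ Finset.range (d + 1 + 1), modFun (((2:ℝ) ^ (n + 1 + i))⁻¹)
        = ∑ i ∈ Finset.range (d + 1), modFun (((2:ℝ) ^ (n + 1 + i))⁻¹)
          + modFun (((2:ℝ) ^ (n + 1 + (d + 1)))⁻¹) := Finset.sum_range_succ _ _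
    by_cases hsmall : b ≤ a + 1
    · rcases Nat.lt_or_ge a b with hlt | hge
      · -- b = a + 1
        have hb : b = a + 1 := by omega
        subst hb
        have h := hstep (n + 1 + (d + 1)) hN1 a (by push_cast at hbT ⊢; linarith)
        have e : ((a + 1 : ℕ) : ℝ) = (a:ℝ) + 1 := by push_cast; ring
        rw [e]
        have := hsum_nonneg d
        rw [hsum]
        nlinarith [modFun_nonneg (((2:ℝ) ^ (n + 1 + (d + 1)))⁻¹), h]
      · -- b = a
        have hb : b = a := by omega
        subst hb
        rw [hHrr]
        have := hsum_nonneg (d + 1)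
        nlinarith
    · -- a + 2 ≤ b : recurse
      push_neg at hsmall
      set a' := (a + 1) / 2 with ha'
      set b' := b / 2 with hb'
      have f1 : a ≤ 2 * a' := by omega
      have f2 : 2 * a' ≤ a + 1 := by omega
      have f3 : 2 * b' ≤ b := by omega
      have f4 : b ≤ 2 * b' + 1 := by omega
      have f5 : a' ≤ b' := by omega
      have f6 : b' - a' ≤ 2 ^ (d + 1) := by
        have : (2:ℕ) ^ (d + 1 + 1) = 2 * 2 ^ (d + 1) := by ring
        omega
      have key : ∀ c : ℕ, ((2 * c : ℕ) : ℝ) * ((2:ℝ) ^ (n + 1 + (d + 1)))⁻¹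
          = (c : ℝ) * ((2:ℝ) ^ (n + 1 + d))⁻¹ := by
        intro c
        have hpe : (2:ℝ) ^ (n + 1 + (d + 1)) = 2 ^ (n + 1 + d) * 2 := pow_succ 2 (n + 1 + d)
        rw [hpe]
        push_cast
        have hp : (0:ℝ) < (2:ℝ) ^ (n + 1 + d) := by positivity
        field_simp
      set u := ((2:ℝ) ^ (n + 1 + (d + 1)))⁻¹ with hudef
      -- real ordering facts
      have r1 : (a:ℝ) * u ≤ ((2 * a' : ℕ) : ℝ) * u := by
        apply mul_le_mul_of_nonneg_right _ hu.le; exact_mod_cast f1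
      have r2 : ((2 * a' : ℕ) : ℝ) * u ≤ ((2 * b' : ℕ) : ℝ) * u := by
        apply mul_le_mul_of_nonneg_right _ hu.le
        have : 2 * a' ≤ 2 * b' := by omega
        exact_mod_cast this
      have r3 : ((2 * b' : ℕ) : ℝ) * u ≤ (b:ℝ) * u := by
        apply mul_le_mul_of_nonneg_right _ hu.le; exact_mod_cast f3
      have r4 : ((2 * a' : ℕ) : ℝ) * u ≤ (b:ℝ) * u := le_trans r2 r3
      have tr1 := htri ((a:ℝ) * u) (((2 * a' : ℕ) : ℝ) * u) ((b:ℝ) * u)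
        (by positivity) r1 r4 hbT
      have tr2 := htri (((2 * a' : ℕ) : ℝ) * u) (((2 * b' : ℕ) : ℝ) * u) ((b:ℝ) * u)
        (by positivity) r2 r3 hbT
      -- middle piece via induction hypothesis
      have hmidT : (b' : ℝ) * ((2:ℝ) ^ (n + 1 + d))⁻¹ ≤ T := by
        rw [← key b']; exact le_trans r3 hbT
      have hmid := ih a' b' f5 hmidT f6
      rw [← key a', ← key b'] at hmid
      -- left edge
      have hleft : H ((a:ℝ) * u) (((2 * a' : ℕ) : ℝ) * u) ≤ C₄ * modFun u := by
        rcases Nat.lt_or_ge a (2 * a') with hl | hl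
        · have he : 2 * a' = a + 1 := by omega
          have hcond : ((a:ℝ) + 1) * ((2:ℝ) ^ (n + 1 + (d + 1)))⁻¹ ≤ T := by
            rw [← hudef]
            have hb1 : ((a:ℝ) + 1) ≤ (b:ℝ) := by exact_mod_cast (show a + 1 ≤ b by omega)
            calc ((a:ℝ) + 1) * u ≤ (b:ℝ) * u := mul_le_mul_of_nonneg_right hb1 hu.le
              _ ≤ T := hbT
          have h := hstep (n + 1 + (d + 1)) hN1 a hcond
          rw [← hudef] at h
          have e : ((2 * a' : ℕ) : ℝ) = (a:ℝ) + 1 := by rw [he]; push_cast; ring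
          rw [e]
          exact h
        · have he : 2 * a' = a := by omega
          rw [he, hHrr]
          exact mul_nonneg hC₄.le (modFun_nonneg _)
      -- right edge
      have hright : H (((2 * b' : ℕ) : ℝ) * u) ((b:ℝ) * u) ≤ C₄ * modFun u := by
        rcases Nat.lt_or_ge (2 * b') b with hl | hl
        · have he : b = 2 * b' + 1 := by omega
          have e : (b:ℝ) = ((2 * b' : ℕ) : ℝ) + 1 := by rw [he]; push_cast; ring
          have hcond : (((2 * b' : ℕ) : ℝ) + 1) * ((2:ℝ) ^ (n + 1 + (d + 1)))⁻¹ ≤ T := by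
            rw [← hudef, ← e]; exact hbT
          have h := hstep (n + 1 + (d + 1)) hN1 (2 * b') hcond
          rw [← hudef] at h
          rw [e]
          exact h
        · have he : 2 * b' = b := by omega
          rw [he, hHrr]
          exact mul_nonneg hC₄.le (modFun_nonneg _)
      rw [hsum]
      have := hsum_nonneg d
      linarith

/-- Chaining along dyadics: if a nonnegative subadditive-in-time function `H` with
`H(r,r) = 0` satisfies `H((k-1)2^{-n}, k2^{-n}) ≤ C₄ h(2^{-n})` for all `n > N` and
`1 ≤ k ≤ 2^n T`, where `2^{-N} ≤ e^{-1}`, then there is a constant `C > 0` (depending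
only on `C₄`) such that `H(r,s) ≤ C h(s-r)` for all dyadic rationals `r, s ∈ [0,T]`
with `0 < s - r ≤ 2^{-N}`. -/
theorem dyadic_chaining (T C₄ : ℝ) (hT : 0 < T) (hC₄ : 0 < C₄) (N : ℕ)
    (hN : ((2 : ℝ) ^ N)⁻¹ ≤ Real.exp (-1))
    (H : ℝ → ℝ → ℝ)
    (hHnn : ∀ r s : ℝ, 0 ≤ H r s)
    (hHrr : ∀ r : ℝ, H r r = 0)
    (htri : ∀ r t s : ℝ, 0 ≤ r → r ≤ t → t ≤ s → s ≤ T → H r s ≤ H r t + H t s)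
    (hdy : ∀ n : ℕ, N < n → ∀ k : ℕ, 1 ≤ k → (k : ℝ) ≤ 2 ^ n * T →
      H (((k : ℝ) - 1) * ((2 : ℝ) ^ n)⁻¹) ((k : ℝ) * ((2 : ℝ) ^ n)⁻¹) ≤
        C₄ * modFun (((2 : ℝ) ^ n)⁻¹)) :
    ∃ C : ℝ, 0 < C ∧ ∀ r s : ℝ,
      (∃ k n : ℕ, r = (k : ℝ) * ((2 : ℝ) ^ n)⁻¹) →
      (∃ k n : ℕ, s = (k : ℝ) * ((2 : ℝ) ^ n)⁻¹) →
      0 ≤ r → s ≤ T → 0 < s - r → s - r ≤ ((2 : ℝ) ^ N)⁻¹ →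
      H r s ≤ C * modFun (s - r) := by
  classical
  refine ⟨64 * C₄, by positivity, ?_⟩
  rintro r s ⟨k, p, rfl⟩ ⟨l, q, rfl⟩ hr0 hsT hpos hle
  set r := (k : ℝ) * ((2 : ℝ) ^ p)⁻¹ with hrdef
  set s := (l : ℝ) * ((2 : ℝ) ^ q)⁻¹ with hsdef
  set δ := s - r with hδ
  have hδ1 : δ ≤ Real.exp (-1) := le_trans hle hN
  have hδlt1 : δ < 1 := lt_of_le_of_lt hδ1 (Real.exp_lt_one_iff.mpr (by norm_num))
  -- find n with 2^(-(n+1)) < δ ≤ 2^(-n)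
  have hex : ∃ m : ℕ, ((2:ℝ) ^ m)⁻¹ < δ := by
    obtain ⟨m, hm⟩ := exists_pow_lt_of_lt_one hpos (show (1:ℝ)/2 < 1 by norm_num)
    exact ⟨m, by rwa [div_pow, one_pow, one_div] at hm⟩
  let m₀ := Nat.find hex
  have hm₀ : ((2:ℝ) ^ m₀)⁻¹ < δ := Nat.find_spec hex
  have hm₀pos : m₀ ≠ 0 := by
    intro h0
    change ((2:ℝ) ^ m₀)⁻¹ < δ at hm₀
    rw [h0] at hm₀
    simp at hm₀
    linarith
  obtain ⟨n, hn⟩ : ∃ n, m₀ = n + 1 := ⟨m₀ - 1, by omega⟩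
  have h1 : ((2:ℝ) ^ (n + 1))⁻¹ < δ := by rw [← hn]; exact hm₀
  have h2 : δ ≤ ((2:ℝ) ^ n)⁻¹ := by
    have := Nat.find_min hex (m := n) (by omega)
    linarith [not_lt.mp this]
  have hnN : N ≤ n := by
    by_contra hc
    push_neg at hc
    have hp1 : ((2:ℝ) ^ N)⁻¹ ≤ ((2:ℝ) ^ (n + 1))⁻¹ := by
      apply inv_anti₀ (by positivity)
      exact pow_le_pow_right₀ (by norm_num) (by omega)
    linarith
  -- common dyadic level
  set m := max (max p q) (n + 1) with hm
  have hpm : p ≤ m := le_trans (le_max_left p q) (le_max_left _ _)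
  have hqm : q ≤ m := le_trans (le_max_right p q) (le_max_left _ _)
  have hn1m : n + 1 ≤ m := le_max_right _ _
  set a := k * 2 ^ (m - p) with ha
  set b := l * 2 ^ (m - q) with hb
  have hpow : ∀ i : ℕ, i ≤ m → (2:ℝ) ^ (m - i) * ((2:ℝ) ^ m)⁻¹ = ((2:ℝ) ^ i)⁻¹ := by
    intro i him
    have : (2:ℝ) ^ (m - i) * (2:ℝ) ^ i = (2:ℝ) ^ m := by
      rw [← pow_add]
      congr 1
      omega
    field_simp
    linarith [this]
  have hra : r = (a : ℝ) * ((2:ℝ) ^ m)⁻¹ := by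
    rw [hrdef, ha]
    push_cast
    rw [mul_assoc, hpow p hpm]
  have hsb : s = (b : ℝ) * ((2:ℝ) ^ m)⁻¹ := by
    rw [hsdef, hb]
    push_cast
    rw [mul_assoc, hpow q hqm]
  have hum : (0:ℝ) < ((2:ℝ) ^ m)⁻¹ := by positivity
  have hab : a ≤ b := by
    have : (a:ℝ) * ((2:ℝ) ^ m)⁻¹ < (b:ℝ) * ((2:ℝ) ^ m)⁻¹ := by
      rw [← hra, ← hsb]; linarith
    have := lt_of_mul_lt_mul_right this hum.le
    exact_mod_cast this.le
  obtain ⟨d, hd⟩ : ∃ d, m = n + 1 + d := ⟨m - (n + 1), by omega⟩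
  have hgap : b - a ≤ 2 ^ (d + 1) := by
    have hcast : ((b - a : ℕ) : ℝ) = (b:ℝ) - (a:ℝ) := by
      push_cast [Nat.cast_sub hab]; ring
    have hba : ((b:ℝ) - (a:ℝ)) * ((2:ℝ) ^ m)⁻¹ = δ := by
      rw [hδ, hra, hsb]; ring
    have h2d : ((2:ℝ) ^ (d + 1) : ℝ) * ((2:ℝ) ^ m)⁻¹ = ((2:ℝ) ^ n)⁻¹ := by
      have : (d + 1 : ℕ) = m - n := by omega
      rw [this]
      exact hpow n (by omega)
    have : ((b:ℝ) - (a:ℝ)) * ((2:ℝ) ^ m)⁻¹ ≤ ((2:ℝ) ^ (d+1)) * ((2:ℝ) ^ m)⁻¹ := by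
      rw [hba, h2d]; exact h2
    have hble : (b:ℝ) - (a:ℝ) ≤ (2:ℝ) ^ (d + 1) := le_of_mul_le_mul_right this hum
    rw [← hcast] at hble
    exact_mod_cast hble
  have hbT : (b : ℝ) * ((2:ℝ) ^ (n + 1 + d))⁻¹ ≤ T := by
    rw [← hd, ← hsb]; exact hsT
  have hmain := chain_lemma T C₄ hC₄ N H hHnn hHrr htri hdy n hnN d a b hab hbT hgap
  rw [← hd, ← hra, ← hsb] at hmain
  -- bound the sum
  have hK : (0:ℝ) ≤ modFun (((2:ℝ) ^ (n + 1))⁻¹) := modFun_nonneg _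
  have hsumb : ∑ i ∈ Finset.range (d + 1), modFun (((2:ℝ) ^ (n + 1 + i))⁻¹)
      ≤ 32 * modFun (((2:ℝ) ^ (n + 1))⁻¹) := by
    calc ∑ i ∈ Finset.range (d + 1), modFun (((2:ℝ) ^ (n + 1 + i))⁻¹)
        ≤ ∑ i ∈ Finset.range (d + 1), 8 * (3/4:ℝ) ^ i * modFun (((2:ℝ) ^ (n + 1))⁻¹) :=
          Finset.sum_le_sum fun i _ => term_bound n i
      _ = 8 * modFun (((2:ℝ) ^ (n + 1))⁻¹) * ∑ i ∈ Finset.range (d + 1), (3/4:ℝ) ^ i := by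
          rw [Finset.mul_sum]
          exact Finset.sum_congr rfl fun i _ => by ring
      _ ≤ 8 * modFun (((2:ℝ) ^ (n + 1))⁻¹) * 4 := by
          apply mul_le_mul_of_nonneg_left _ (by positivity)
          have := geom_aux (d + 1)
          have hp : (0:ℝ) ≤ ((3:ℝ)/4) ^ (d + 1) := by positivity
          linarith
      _ = 32 * modFun (((2:ℝ) ^ (n + 1))⁻¹) := by ring
  have hmono : modFun (((2:ℝ) ^ (n + 1))⁻¹) ≤ modFun δ :=
    modFun_mono (by positivity) h1.le hδ1
  calc H r s ≤ 2 * C₄ * ∑ i ∈ Finset.range (d + 1), modFun (((2:ℝ) ^ (n + 1 + i))⁻¹) := hmain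
    _ ≤ 2 * C₄ * (32 * modFun (((2:ℝ) ^ (n + 1))⁻¹)) := by
        apply mul_le_mul_of_nonneg_left hsumb (by positivity)
    _ ≤ 2 * C₄ * (32 * modFun δ) := by nlinarith [hmono]
    _ = 64 * C₄ * modFun δ := by ring
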